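/- With the Malitsky–Tam operator T for closed subspaces U₁,…,Uₙ of X and Z = ∩U_i: for z = (z₁,…,z_{n−1}) ∈ X^{n−1} with z̄ = (z₁+⋯+z_{n−1})/(n−1), the projection onto Fix T satisfies P_{Fix T}(z) = (P_Z z̄, …, P_Z z̄) + P_E(z), where E = ran Ψ ∩ (X^{n−2} × Uₙ^⊥); consequently P₁(Q₁ P_{Fix T} z) = P_Z z̄. -/

import Mathlib

open Filter

variable {X : Type*} [NormedAddCommGroup X] [InnerProductSpace ℝ X] [CompleteSpace X]

/-- The orthogonal projection onto a subspace, as a map `X → X`. -/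
noncomputable def pr (U : Submodule ℝ X) [Submodule.HasOrthogonalProjection U] (x : X) : X :=
  U.orthogonalProjectionOnto x

/-- Extension of a tuple in `X^m` to an `ℕ`-indexed family (by zero). -/
noncomputable def extz {m : ℕ} (z : PiLp 2 (fun _ : Fin m => X)) : ℕ → X :=
  fun i => if h : i < m then z ⟨i, h⟩ else 0

/-- The auxiliary sequence `x₁, …, xₙ` of the Malitsky–Tam operator (0-based indexing):
`x 0 = P₀ (z 0)`, `x i = Pᵢ (x (i−1) + z i − z (i−1))` for `1 ≤ i ≤ n − 2`, and
`x (n−1) = P_{n−1} (x 0 + x (n−2) − z (n−2))`. -/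
noncomputable def mtX (n : ℕ) (U : ℕ → Submodule ℝ X) [∀ i, Submodule.HasOrthogonalProjection (U i)]
    (z : ℕ → X) : ℕ → X
  | 0 => pr (U 0) (z 0)
  | (i + 1) =>
      if i + 1 ≤ n - 2 then pr (U (i + 1)) (mtX n U z i + z (i + 1) - z i)
      else if i + 1 = n - 1 then pr (U (n - 1)) (mtX n U z 0 + mtX n U z i - z i)
      else 0

/-- The Malitsky–Tam operator `T z = z + (x₂ − x₁, …, xₙ − x_{n−1})` on `X^{n−1}`. -/
noncomputable def mtT (n : ℕ) (U : ℕ → Submodule ℝ X) [∀ i, Submodule.HasOrthogonalProjection (U i)]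
    (z : PiLp 2 (fun _ : Fin (n - 1) => X)) : PiLp 2 (fun _ : Fin (n - 1) => X) :=
  (WithLp.equiv 2 (∀ _ : Fin (n - 1), X)).symm fun j =>
    z j + (mtX n U (extz z) ((j : ℕ) + 1) - mtX n U (extz z) (j : ℕ))

/-- The diagonal embedding `X → X^m`, `x ↦ (x, …, x)`, as a linear map into `ℓ²`-product. -/
noncomputable def diagMap (m : ℕ) (X : Type*) [NormedAddCommGroup X]
    [InnerProductSpace ℝ X] : X →ₗ[ℝ] PiLp 2 (fun _ : Fin m => X) :=
  (WithLp.linearEquiv 2 ℝ (∀ _ : Fin m, X)).symm.toLinearMap ∘ₗ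
    LinearMap.pi fun _ => LinearMap.id

/-- The partial-sum operator `(y₁, …, y_m) ↦ (y₁, y₁ + y₂, …, y₁ + ⋯ + y_m)` on `X^m`. -/
noncomputable def psumL (m : ℕ) (X : Type*) [NormedAddCommGroup X]
    [InnerProductSpace ℝ X] :
    PiLp 2 (fun _ : Fin m => X) →ₗ[ℝ] PiLp 2 (fun _ : Fin m => X) :=
  (WithLp.linearEquiv 2 ℝ (∀ _ : Fin m, X)).symm.toLinearMap ∘ₗ
    (LinearMap.pi fun j : Fin m =>
      ∑ i ∈ Finset.univ.filter (fun i : Fin m => i ≤ j), LinearMap.proj i) ∘ₗ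
    (WithLp.linearEquiv 2 ℝ (∀ _ : Fin m, X)).toLinearMap

/-- The range of the partial-sum operator `Ψ` restricted to `U₁^⊥ × ⋯ × U_m^⊥`. -/
noncomputable def ranPsi (m : ℕ) (U : ℕ → Submodule ℝ X) :
    Submodule ℝ (PiLp 2 (fun _ : Fin m => X)) :=
  Submodule.map (psumL m X)
    (Submodule.comap (WithLp.linearEquiv 2 ℝ (∀ _ : Fin m, X)).toLinearMap
      (Submodule.pi Set.univ fun j : Fin m => (U (j : ℕ))ᗮ))


set_option linter.unusedSectionVars false

lemma pr_eq (U : Submodule ℝ X) [Submodule.HasOrthogonalProjection U] {v : X} (u : X) (hv : v ∈ U)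
    (h : u - v ∈ Uᗮ) : pr U u = v :=
  Submodule.eq_starProjection_of_mem_orthogonal hv h

lemma pr_mem (U : Submodule ℝ X) [Submodule.HasOrthogonalProjection U] (u : X) : pr U u ∈ U :=
  (U.orthogonalProjectionOnto u).2

lemma pr_sub_mem (U : Submodule ℝ X) [Submodule.HasOrthogonalProjection U] (u : X) : u - pr U u ∈ Uᗮ :=
  U.sub_starProjection_mem_orthogonal u

lemma extz_lt {m : ℕ} (z : PiLp 2 (fun _ : Fin m => X)) (k : ℕ) (hk : k < m) :
    extz z k = z ⟨k, hk⟩ := dif_pos hk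

lemma mtX_zero (n : ℕ) (U : ℕ → Submodule ℝ X) [∀ i, Submodule.HasOrthogonalProjection (U i)] (z : ℕ → X) :
    mtX n U z 0 = pr (U 0) (z 0) := by rw [mtX]

lemma mtX_succ (n i : ℕ) (U : ℕ → Submodule ℝ X) [∀ i, Submodule.HasOrthogonalProjection (U i)] (z : ℕ → X) :
    mtX n U z (i+1) = if i + 1 ≤ n - 2 then pr (U (i + 1)) (mtX n U z i + z (i + 1) - z i)
      else if i + 1 = n - 1 then pr (U (n - 1)) (mtX n U z 0 + mtX n U z i - z i)
      else 0 := by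
  conv_lhs => rw [mtX]

lemma mtT_apply (n : ℕ) (U : ℕ → Submodule ℝ X) [∀ i, Submodule.HasOrthogonalProjection (U i)]
    (y : PiLp 2 (fun _ : Fin (n-1) => X)) (j : Fin (n-1)) :
    mtT n U y j = y j + (mtX n U (extz y) ((j:ℕ)+1) - mtX n U (extz y) (j:ℕ)) := rfl

lemma diagMap_apply (m : ℕ) (w : X) (j : Fin m) : diagMap m X w j = w := rfl

lemma psumL_apply (m : ℕ) (y : PiLp 2 (fun _ : Fin m => X)) (j : Fin m) :
    psumL m X y j = ∑ i ∈ Finset.univ.filter (fun i : Fin m => i ≤ j), y i := by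
  simp [psumL, WithLp.linearEquiv, LinearMap.pi_apply]

lemma psumL_zero (m : ℕ) (h : 0 < m) (y : PiLp 2 (fun _ : Fin m => X)) :
    psumL m X y ⟨0, h⟩ = y ⟨0, h⟩ := by
  rw [psumL_apply]
  have : Finset.univ.filter (fun i : Fin m => i ≤ ⟨0, h⟩) = {⟨0, h⟩} := by
    ext i; simp [Fin.le_def, Fin.ext_iff, Nat.le_zero]
  rw [this, Finset.sum_singleton]

lemma psumL_succ (m k : ℕ) (hk : k + 1 < m) (y : PiLp 2 (fun _ : Fin m => X)) :
    psumL m X y ⟨k + 1, hk⟩ = y ⟨k + 1, hk⟩ + psumL m X y ⟨k, by omega⟩ := by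
  rw [psumL_apply, psumL_apply]
  have : Finset.univ.filter (fun i : Fin m => i ≤ ⟨k + 1, hk⟩) =
      insert ⟨k + 1, hk⟩ (Finset.univ.filter (fun i : Fin m => i ≤ ⟨k, by omega⟩)) := by
    ext i; simp only [Finset.mem_filter, Finset.mem_univ, true_and, Finset.mem_insert,
      Fin.le_def, Fin.ext_iff]
    omega
  rw [this, Finset.sum_insert (by simp [Fin.le_def])]

lemma fix_iff (n : ℕ) (hn : 3 ≤ n) (U : ℕ → Submodule ℝ X) [∀ i, CompleteSpace (U i)]
    (y : PiLp 2 (fun _ : Fin (n - 1) => X)) :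
    mtT n U y = y ↔
      y ∈ Submodule.map (diagMap (n - 1) X) (⨅ i : Fin n, U (i : ℕ)) ⊔
        (ranPsi (n - 1) U ⊓
          Submodule.comap
            ((LinearMap.proj (⟨n - 2, Nat.sub_lt_sub_left (by omega : 1 < n) (by omega : 1 < 2)⟩ : Fin (n - 1))).comp
              (WithLp.linearEquiv 2 ℝ (∀ _ : Fin (n - 1), X)).toLinearMap)
            (U (n - 1))ᗮ) := by
  classical
  constructor
  · intro hy
    have hcomp : ∀ j : Fin (n - 1),
        mtX n U (extz y) ((j : ℕ) + 1) = mtX n U (extz y) (j : ℕ) := by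
      intro j
      have h1 : mtT n U y j = y j := by rw [hy]
      rw [mtT_apply] at h1
      have h2 := add_eq_left.mp h1
      exact sub_eq_zero.mp h2
    have hall : ∀ i, i ≤ n - 1 → mtX n U (extz y) i = mtX n U (extz y) 0 := by
      intro i hi
      induction i with
      | zero => rfl
      | succ k ih =>
        have h1 := hcomp ⟨k, by omega⟩
        simp only [Fin.val_mk] at h1
        rw [h1]
        exact ih (by omega)
    set d := mtX n U (extz y) 0 with hd
    have hd0mem : d ∈ U 0 := by rw [hd, mtX_zero]; exact pr_mem _ _
    have hd0orth : extz y 0 - d ∈ (U 0)ᗮ := by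
      rw [hd, mtX_zero]; exact pr_sub_mem _ _
    have hmid : ∀ k, k + 1 ≤ n - 2 →
        extz y (k + 1) - extz y k ∈ (U (k + 1))ᗮ ∧ d ∈ U (k + 1) := by
      intro k hk
      have e1 : mtX n U (extz y) (k + 1) =
          pr (U (k + 1)) (mtX n U (extz y) k + extz y (k + 1) - extz y k) := by
        rw [mtX_succ, if_pos hk]
      have e2 : mtX n U (extz y) (k + 1) = d := hall _ (by omega)
      have e3 : mtX n U (extz y) k = d := hall _ (by omega)
      rw [e2, e3] at e1
      constructor
      · have h4 := pr_sub_mem (U (k + 1)) (d + extz y (k + 1) - extz y k)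
        rw [← e1] at h4
        have h5 : d + extz y (k + 1) - extz y k - d = extz y (k + 1) - extz y k := by abel
        rwa [h5] at h4
      · rw [e1]; exact pr_mem _ _
    have hlast : d - extz y (n - 2) ∈ (U (n - 1))ᗮ ∧ d ∈ U (n - 1) := by
      have hn1 : n - 1 = (n - 2) + 1 := by omega
      have e1 : mtX n U (extz y) ((n - 2) + 1) =
          pr (U (n - 1)) (mtX n U (extz y) 0 + mtX n U (extz y) (n - 2) - extz y (n - 2)) := by
        rw [mtX_succ, if_neg (by omega), if_pos (by omega)]
      have e2 : mtX n U (extz y) ((n - 2) + 1) = d := hall _ (by omega)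
      have e3 : mtX n U (extz y) (n - 2) = d := hall _ (by omega)
      rw [e2, e3, ← hd] at e1
      constructor
      · have h4 := pr_sub_mem (U (n - 1)) (d + d - extz y (n - 2))
        rw [← e1] at h4
        have h5 : d + d - extz y (n - 2) - d = d - extz y (n - 2) := by abel
        rwa [h5] at h4
      · rw [e1]; exact pr_mem _ _
    have hdZ : ∀ i : Fin n, d ∈ U (i : ℕ) := by
      intro i
      by_cases h0 : (i : ℕ) = 0
      · rw [h0]; exact hd0mem
      by_cases hl : (i : ℕ) = n - 1
      · rw [hl]; exact hlast.2
      · have hk : (i : ℕ) - 1 + 1 = (i : ℕ) := by omega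
        have hi : (i : ℕ) < n := i.2
        have := (hmid ((i : ℕ) - 1) (by omega)).2
        rwa [hk] at this
    set u : PiLp 2 (fun _ : Fin (n - 1) => X) :=
      WithLp.toLp 2 (fun j : Fin (n - 1) => if h : (j : ℕ) = 0 then y j - d
        else y j - y ⟨(j : ℕ) - 1, lt_of_le_of_lt (Nat.sub_le _ _) j.2⟩) with hu
    have humem : ∀ j : Fin (n - 1), u j ∈ (U (j : ℕ))ᗮ := by
      intro j
      obtain ⟨k, hk⟩ := j
      rcases Nat.eq_zero_or_pos k with h0 | h0
      · subst h0
        rw [hu]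
        simp only [Fin.val_mk, dif_pos rfl]
        have := hd0orth
        rwa [extz_lt y 0 (by omega)] at this
      · have hk1 : (k - 1) + 1 = k := by omega
        have h2 := (hmid (k - 1) (by omega)).1
        rw [hk1] at h2
        rw [extz_lt y k hk, extz_lt y (k - 1) (by omega)] at h2
        rw [hu]
        simp only [Fin.val_mk, dif_neg (by omega : ¬ k = 0)]
        exact h2
    have htel : ∀ k (hk : k < n - 1), psumL (n - 1) X u ⟨k, hk⟩ = y ⟨k, hk⟩ - d := by
      intro k
      induction k with
      | zero =>
        intro hk
        rw [psumL_zero, hu]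
        simp only [Fin.val_mk, dif_pos rfl]
        simp
      | succ m ih =>
        intro hk
        rw [psumL_succ, ih (by omega)]
        have h1 : u ⟨m + 1, hk⟩ = y ⟨m + 1, hk⟩ - y ⟨m, by omega⟩ := by
          rw [hu]; simp only [Fin.val_mk, dif_neg (by omega : ¬ m + 1 = 0)]; rfl
        rw [h1]
        abel
    have hyeq : y = diagMap (n - 1) X d + psumL (n - 1) X u := by
      ext j
      obtain ⟨k, hk⟩ := j
      have : (diagMap (n - 1) X d + psumL (n - 1) X u) ⟨k, hk⟩
          = d + psumL (n - 1) X u ⟨k, hk⟩ := rfl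
      rw [this, htel k hk]
      abel
    refine Submodule.mem_sup.mpr ⟨diagMap (n - 1) X d,
      Submodule.mem_map.mpr ⟨d, (Submodule.mem_iInf _).mpr hdZ, rfl⟩,
      psumL (n - 1) X u, ⟨?_, ?_⟩, hyeq.symm⟩
    · exact ⟨u, (Submodule.mem_pi).mpr (fun j _ => humem j), rfl⟩
    · show psumL (n - 1) X u ⟨n - 2, by omega⟩ ∈ (U (n - 1))ᗮ
      rw [htel (n - 2) (by omega)]
      have h2 : y ⟨n - 2, by omega⟩ - d = -(d - extz y (n - 2)) := by
        rw [extz_lt y (n - 2) (by omega)]; abel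
      rw [h2]
      exact neg_mem hlast.1
  · intro hy
    obtain ⟨a, ha, b, hb, rfl⟩ := Submodule.mem_sup.mp hy
    obtain ⟨d, hdZ, rfl⟩ := Submodule.mem_map.mp ha
    obtain ⟨hb1, hb2⟩ := hb
    obtain ⟨u, hu, rfl⟩ := hb1
    have hdU : ∀ i : Fin n, d ∈ U (i : ℕ) := (Submodule.mem_iInf _).mp hdZ
    have huU : ∀ j : Fin (n - 1), u j ∈ (U (j : ℕ))ᗮ := by
      intro j
      exact (Submodule.mem_pi.mp (Submodule.mem_comap.mp hu)) j trivial
    set y := diagMap (n - 1) X d + psumL (n - 1) X u with hydef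
    have hcomp : ∀ k (hk : k < n - 1), y ⟨k, hk⟩ = d + psumL (n - 1) X u ⟨k, hk⟩ := fun _ _ => rfl
    have hXval : ∀ k, k ≤ n - 2 → mtX n U (extz y) k = d := by
      intro k
      induction k with
      | zero =>
        intro _
        rw [mtX_zero, extz_lt y 0 (by omega), hcomp 0 (by omega), psumL_zero]
        refine pr_eq _ _ (hdU ⟨0, by omega⟩) ?_
        rw [add_sub_cancel_left]
        exact huU ⟨0, by omega⟩
      | succ k ih =>
        intro hk
        rw [mtX_succ, if_pos hk, ih (by omega),
          extz_lt y (k + 1) (by omega), extz_lt y k (by omega),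
          hcomp (k + 1) (by omega), hcomp k (by omega),
          psumL_succ (n - 1) k (by omega)]
        refine pr_eq _ _ (hdU ⟨k + 1, by omega⟩) ?_
        have h5 : d + (d + (u ⟨k + 1, by omega⟩ + psumL (n - 1) X u ⟨k, by omega⟩)) -
            (d + psumL (n - 1) X u ⟨k, by omega⟩) - d = u ⟨k + 1, by omega⟩ := by abel
        rw [h5]
        exact huU ⟨k + 1, by omega⟩
    have hXlast : mtX n U (extz y) (n - 1) = d := by
      have hn1 : (n - 2) + 1 = n - 1 := by omega
      have key : mtX n U (extz y) ((n - 2) + 1) = d := by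
        rw [mtX_succ, if_neg (by omega), if_pos (by omega),
          hXval 0 (by omega), hXval (n - 2) (by omega),
          extz_lt y (n - 2) (by omega), hcomp (n - 2) (by omega)]
        refine pr_eq _ _ (hdU ⟨n - 1, by omega⟩) ?_
        have h5 : d + d - (d + psumL (n - 1) X u ⟨n - 2, by omega⟩) - d
            = -(psumL (n - 1) X u ⟨n - 2, by omega⟩) := by abel
        rw [h5]
        exact neg_mem hb2
      rwa [hn1] at key
    ext j
    rw [mtT_apply]
    obtain ⟨k, hk⟩ := j
    have h1 : mtX n U (extz y) k = d := hXval k (by omega)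
    have h2 : mtX n U (extz y) (k + 1) = d := by
      rcases Nat.lt_or_ge (k + 1) (n - 1) with h | h
      · exact hXval (k + 1) (by omega)
      · have : k + 1 = n - 1 := by omega
        rw [this]; exact hXlast
    simp only [Fin.val_mk, h1, h2, sub_self, add_zero]

lemma min_orth {Y : Type*} [NormedAddCommGroup Y] [InnerProductSpace ℝ Y]
    (K : Submodule ℝ Y) (z f : Y) (hf : f ∈ K) (hmin : ∀ q ∈ K, ‖z - f‖ ≤ ‖z - q‖) :
    ∀ p ∈ K, (inner ℝ (z - f) p : ℝ) = 0 := by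
  intro p hp
  by_contra hc
  set c : ℝ := inner ℝ (z - f) p with hcdef
  have hp0 : p ≠ 0 := by
    rintro rfl
    rw [inner_zero_right] at hcdef
    exact hc hcdef
  have hpn : (0:ℝ) < ‖p‖^2 := by
    have := norm_pos_iff.mpr hp0
    positivity
  set t : ℝ := c / ‖p‖^2 with htdef
  have hq : f + t • p ∈ K := K.add_mem hf (K.smul_mem t hp)
  have h1 := hmin _ hq
  have h2 : ‖z - (f + t • p)‖^2 = ‖z - f‖^2 - 2*(t*c) + t^2*‖p‖^2 := by
    have hsp : z - (f + t • p) = (z - f) - t • p := by abel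
    rw [hsp, norm_sub_sq_real, real_inner_smul_right, norm_smul, Real.norm_eq_abs,
      mul_pow, sq_abs, ← hcdef]
  have h3 : ‖z - f‖^2 ≤ ‖z - (f + t • p)‖^2 :=
    pow_le_pow_left₀ (norm_nonneg _) h1 2
  rw [h2] at h3
  have e1 : t * c = c^2 / ‖p‖^2 := by rw [htdef]; field_simp
  have e2 : t^2 * ‖p‖^2 = c^2 / ‖p‖^2 := by rw [htdef]; field_simp
  rw [e1, e2] at h3
  have hc2 : 0 < c^2 := lt_of_le_of_ne (sq_nonneg c) (Ne.symm (pow_ne_zero 2 hc))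
  have : 0 < c^2 / ‖p‖^2 := div_pos hc2 hpn
  linarith

lemma inner_psumL_diag (m : ℕ) (U : ℕ → Submodule ℝ X) (u : PiLp 2 (fun _ : Fin m => X))
    (hu : ∀ j : Fin m, u j ∈ (U (j : ℕ))ᗮ) (w : X) (hw : ∀ i : Fin m, w ∈ U (i : ℕ)) :
    (inner ℝ (psumL m X u) (diagMap m X w) : ℝ) = 0 := by
  rw [PiLp.inner_apply]
  refine Finset.sum_eq_zero fun j _ => ?_
  rw [psumL_apply]
  have : (diagMap m X w) j = w := rfl
  rw [this, sum_inner]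
  refine Finset.sum_eq_zero fun i _ => ?_
  exact (Submodule.mem_orthogonal' _ _).mp (hu i) w (hw i)


/-- with `T` the Malitsky–Tam operator, `Fix T = D ⊕ E`, and
`z̄ = (z₀ + ⋯ + z_{n−2})/(n−1)`: `P_{Fix T} z = (P_Z z̄, …, P_Z z̄) + P_E z`, and consequently
`P₀ ((P_{Fix T} z)₀) = P_Z z̄`.  Here `P_Z z̄` and `P_E z` are characterized by orthogonality
and `P_{Fix T} z` by the nearest-point property. -/
theorem stmt16 (n : ℕ) (hn : 3 ≤ n) (U : ℕ → Submodule ℝ X) [∀ i, CompleteSpace (U i)]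
    (z : PiLp 2 (fun _ : Fin (n - 1) => X)) :
    ∀ w : X,
      (w ∈ (⨅ i : Fin n, U (i : ℕ)) ∧
        ((n : ℝ) - 1)⁻¹ • (∑ j : Fin (n - 1), z j) - w ∈ (⨅ i : Fin n, U (i : ℕ))ᗮ) →
    ∀ f : PiLp 2 (fun _ : Fin (n - 1) => X),
      (f ∈ {y : PiLp 2 (fun _ : Fin (n - 1) => X) | mtT n U y = y} ∧
        ∀ q ∈ {y : PiLp 2 (fun _ : Fin (n - 1) => X) | mtT n U y = y},
          ‖z - f‖ ≤ ‖z - q‖) →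
    ∀ e : PiLp 2 (fun _ : Fin (n - 1) => X),
      (e ∈ ranPsi (n - 1) U ⊓
          Submodule.comap
            ((LinearMap.proj (⟨n - 2, by omega⟩ : Fin (n - 1))).comp
              (WithLp.linearEquiv 2 ℝ (∀ _ : Fin (n - 1), X)).toLinearMap)
            (U (n - 1))ᗮ ∧
        z - e ∈ (ranPsi (n - 1) U ⊓
          Submodule.comap
            ((LinearMap.proj (⟨n - 2, by omega⟩ : Fin (n - 1))).comp
              (WithLp.linearEquiv 2 ℝ (∀ _ : Fin (n - 1), X)).toLinearMap)
            (U (n - 1))ᗮ)ᗮ) →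
    f = diagMap (n - 1) X w + e ∧ pr (U 0) (f ⟨0, by omega⟩) = w := by
  intro w hw f hf e he
  obtain ⟨hw1, hw2⟩ := hw
  obtain ⟨hf1, hf2⟩ := hf
  obtain ⟨he1, he2⟩ := he
  set Z := ⨅ i : Fin n, U (i : ℕ) with hZdef
  set E' := ranPsi (n - 1) U ⊓
      Submodule.comap
        ((LinearMap.proj (⟨n - 2, by omega⟩ : Fin (n - 1))).comp
          (WithLp.linearEquiv 2 ℝ (∀ _ : Fin (n - 1), X)).toLinearMap)
        (U (n - 1))ᗮ with hE'def
  set F := Submodule.map (diagMap (n - 1) X) Z ⊔ E' with hFdef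
  have hfixF : ∀ q : PiLp 2 (fun _ : Fin (n - 1) => X), mtT n U q = q ↔ q ∈ F :=
    fun q => fix_iff n hn U q
  have hfF : f ∈ F := (hfixF f).mp hf1
  have hne : ((n : ℝ) - 1) ≠ 0 := by
    have h3 : (3 : ℝ) ≤ (n : ℝ) := by exact_mod_cast hn
    linarith
  -- z - f ⊥ F
  have horthf : ∀ p ∈ F, (inner ℝ (z - f) p : ℝ) = 0 :=
    min_orth F z f hfF (fun q hq => hf2 q ((hfixF q).mpr hq))
  -- g ∈ F
  have hgF : diagMap (n - 1) X w + e ∈ F :=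
    Submodule.add_mem F
      (Submodule.mem_sup_left (Submodule.mem_map.mpr ⟨w, hw1, rfl⟩))
      (Submodule.mem_sup_right he1)
  -- z - g ⊥ F
  have horthg : ∀ p ∈ F, (inner ℝ (z - (diagMap (n - 1) X w + e)) p : ℝ) = 0 := by
    intro p hp
    obtain ⟨a, ha, b, hb, rfl⟩ := Submodule.mem_sup.mp hp
    obtain ⟨d, hdZ, rfl⟩ := Submodule.mem_map.mp ha
    have hdU : ∀ i : Fin n, d ∈ U (i : ℕ) := (Submodule.mem_iInf _).mp hdZ
    have hA : (inner ℝ e (diagMap (n - 1) X d) : ℝ) = 0 := by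
      obtain ⟨ue, hue, heq⟩ := (Submodule.mem_inf.mp he1).1
      rw [← heq]
      refine inner_psumL_diag (n - 1) U ue ?_ d ?_
      · exact fun j => (Submodule.mem_pi.mp (Submodule.mem_comap.mp hue)) j trivial
      · exact fun i => hdU ⟨(i : ℕ), by omega⟩
    have hB : (inner ℝ (diagMap (n - 1) X w) b : ℝ) = 0 := by
      obtain ⟨ub, hub, heq⟩ := (Submodule.mem_inf.mp hb).1
      rw [← heq, real_inner_comm]
      refine inner_psumL_diag (n - 1) U ub ?_ w ?_
      · exact fun j => (Submodule.mem_pi.mp (Submodule.mem_comap.mp hub)) j trivial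
      · exact fun i => (Submodule.mem_iInf _).mp hw1 ⟨(i : ℕ), by omega⟩
    have hC : (inner ℝ (z - e) b : ℝ) = 0 :=
      (Submodule.mem_orthogonal' _ _).mp he2 b hb
    -- hD
    have hcast : ((n - 1 : ℕ) : ℝ) = (n : ℝ) - 1 := by
      rw [Nat.cast_sub (by omega)]; norm_num
    have hzS : (inner ℝ z (diagMap (n - 1) X d) : ℝ) = inner ℝ (∑ j : Fin (n - 1), z j) d := by
      rw [PiLp.inner_apply, sum_inner]
      rfl
    have hwd : (inner ℝ (diagMap (n - 1) X w) (diagMap (n - 1) X d) : ℝ)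
        = ((n : ℝ) - 1) * inner ℝ w d := by
      rw [PiLp.inner_apply]
      have : ∀ j : Fin (n - 1),
          (inner ℝ ((diagMap (n - 1) X w) j) ((diagMap (n - 1) X d) j) : ℝ) = inner ℝ w d :=
        fun j => rfl
      rw [Finset.sum_congr rfl (fun j _ => this j), Finset.sum_const, Finset.card_univ,
        Fintype.card_fin, nsmul_eq_mul, hcast]
    have hzd : ((n : ℝ) - 1)⁻¹ * (inner ℝ (∑ j : Fin (n - 1), z j) d : ℝ) - inner ℝ w d = 0 := by
      have h0 := (Submodule.mem_orthogonal' _ _).mp hw2 d hdZ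
      rwa [inner_sub_left, real_inner_smul_left] at h0
    have hD : (inner ℝ (z - diagMap (n - 1) X w) (diagMap (n - 1) X d) : ℝ) = 0 := by
      rw [inner_sub_left, hzS, hwd]
      set s := (inner ℝ (∑ j : Fin (n - 1), z j) d : ℝ)
      set t := (inner ℝ w d : ℝ)
      have h3 : ((n : ℝ) - 1) * (((n : ℝ) - 1)⁻¹ * s) = ((n : ℝ) - 1) * t := by
        rw [sub_eq_zero] at hzd
        rw [hzd]
      rw [← mul_assoc, mul_inv_cancel₀ hne, one_mul] at h3
      linarith
    have hsplit : z - (diagMap (n - 1) X w + e) = (z - diagMap (n - 1) X w) - e := by abel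
    rw [hsplit, inner_sub_left, inner_add_right, inner_add_right, inner_sub_left] at *
    rw [inner_sub_left]
    linarith
  -- conclude f = g
  have hfg : f = diagMap (n - 1) X w + e := by
    have hmem : f - (diagMap (n - 1) X w + e) ∈ F := Submodule.sub_mem F hfF hgF
    have hinner : (inner ℝ (f - (diagMap (n - 1) X w + e)) (f - (diagMap (n - 1) X w + e)) : ℝ)
        = 0 := by
      have h1 := horthf _ hmem
      have h2 := horthg _ hmem
      have hsplit : f - (diagMap (n - 1) X w + e)
          = (z - (diagMap (n - 1) X w + e)) - (z - f) := by abel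
      calc (inner ℝ (f - (diagMap (n - 1) X w + e)) (f - (diagMap (n - 1) X w + e)) : ℝ)
          = inner ℝ ((z - (diagMap (n - 1) X w + e)) - (z - f))
              (f - (diagMap (n - 1) X w + e)) := by rw [← hsplit]
        _ = (inner ℝ (z - (diagMap (n - 1) X w + e)) (f - (diagMap (n - 1) X w + e)) : ℝ)
              - inner ℝ (z - f) (f - (diagMap (n - 1) X w + e)) := inner_sub_left _ _ _
        _ = 0 := by rw [h1, h2]; ring
    have := @inner_self_eq_zero ℝ _ _ _ _ (f - (diagMap (n - 1) X w + e)) |>.mp hinner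
    exact sub_eq_zero.mp this
  refine ⟨hfg, ?_⟩
  have he0 : e ⟨0, by omega⟩ ∈ (U 0)ᗮ := by
    obtain ⟨ue, hue, heq⟩ := (Submodule.mem_inf.mp he1).1
    rw [← heq, psumL_zero (n - 1) (by omega)]
    exact (Submodule.mem_pi.mp (Submodule.mem_comap.mp hue)) ⟨0, by omega⟩ trivial
  have hf0 : f ⟨0, by omega⟩ = w + e ⟨0, by omega⟩ := by rw [hfg]; rfl
  rw [hf0]
  refine pr_eq _ _ ((Submodule.mem_iInf _).mp hw1 ⟨0, by omega⟩) ?_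
  rw [add_sub_cancel_left]
  exact he0
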